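/- arXiv:1503.01220 — 5 statements merged into one kernel-verified Lean document; each statement's English description precedes it below -/
import Mathlib

section
/- For the star graph on n ≥ 2 vertices with central agent h, where every noncentral agent i has g_{ih} = 1 and the central agent satisfies Σ_i g_{hi} = 1 with g_{hi} = 1/(n-1) for each noncentral i, the centrality satisfies v_h = (1 + δ(n-1)/(2β))/(1 - (δ/(2β))²) and each noncentral agent has centrality v_l = (1 + δ/(2β(n-1)))/(1 - (δ/(2β))²), under 0 < δ < 2β. -/
open Matrix Finset

theorem star_graph_centrality (n : ℕ) (hn : 2 ≤ n) (G : Matrix (Fin n) (Fin n) ℝ) (δ β : ℝ)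
    (h : Fin n)
    (hGcenter : ∀ i, i ≠ h → G i h = 1)
    (hGout : ∀ i, i ≠ h → G h i = 1 / (n - 1))
    (hGzero : ∀ i j, j ≠ h → i ≠ h → G i j = 0)
    (hGdiag : ∀ i, G i i = 0)
    (hδ0 : 0 < δ) (hδβ : δ < 2 * β)
    (v : Fin n → ℝ)
    (hv : v = ((1 : Matrix (Fin n) (Fin n) ℝ) - δ • ((2 * β)⁻¹ • G)ᵀ)⁻¹ *ᵥ (fun _ => (1 : ℝ))) :
    v h = (1 + δ * (n - 1) / (2 * β)) / (1 - (δ / (2 * β)) ^ 2) ∧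
      ∀ i, i ≠ h → v i = (1 + δ / (2 * β * (n - 1))) / (1 - (δ / (2 * β)) ^ 2) := by
  have hβ : (0:ℝ) < 2 * β := lt_trans hδ0 hδβ
  set c : ℝ := δ / (2 * β) with hc
  have hc0 : 0 < c := div_pos hδ0 hβ
  have hc1 : c < 1 := (div_lt_one hβ).mpr hδβ
  have hcsq : 1 - c ^ 2 ≠ 0 := by nlinarith
  have hn1 : (n : ℝ) - 1 ≠ 0 := by
    have : (2:ℝ) ≤ n := by exact_mod_cast hn
    linarith
  set M : Matrix (Fin n) (Fin n) ℝ := 1 - c • Gᵀ with hM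
  have hMeq : (1 : Matrix (Fin n) (Fin n) ℝ) - δ • ((2 * β)⁻¹ • G)ᵀ = M := by
    rw [hM, transpose_smul, smul_smul, hc, div_eq_mul_inv]
  rw [hMeq] at hv
  -- componentwise formulas for M *ᵥ x
  have hMh : ∀ x : Fin n → ℝ, (M *ᵥ x) h = x h - c * ∑ j ∈ univ.erase h, x j := by
    intro x
    have : (M *ᵥ x) h = ∑ j, ((if h = j then (1:ℝ) else 0) - c * G j h) * x j := by
      simp [hM, mulVec, dotProduct, Matrix.sub_apply, Matrix.one_apply, Matrix.smul_apply]
    rw [this]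
    have hsplit : ∀ j, ((if h = j then (1:ℝ) else 0) - c * G j h) * x j
        = (if h = j then x j else 0) - c * (G j h * x j) := by
      intro j; split <;> ring
    rw [Finset.sum_congr rfl fun j _ => hsplit j, Finset.sum_sub_distrib,
      Finset.sum_ite_eq, ← Finset.mul_sum]
    simp only [mem_univ, if_pos]
    congr 1
    rw [← Finset.add_sum_erase _ _ (mem_univ h), hGdiag h, zero_mul, zero_add]
    congr 1
    refine Finset.sum_congr rfl fun j hj => ?_
    rw [hGcenter j (Finset.ne_of_mem_erase hj), one_mul]
  have hMi : ∀ x : Fin n → ℝ, ∀ i, i ≠ h → (M *ᵥ x) i = x i - c / ((n:ℝ) - 1) * x h := by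
    intro x i hi
    have : (M *ᵥ x) i = ∑ j, ((if i = j then (1:ℝ) else 0) - c * G j i) * x j := by
      simp [hM, mulVec, dotProduct, Matrix.sub_apply, Matrix.one_apply, Matrix.smul_apply]
    rw [this]
    have hsplit : ∀ j, ((if i = j then (1:ℝ) else 0) - c * G j i) * x j
        = (if i = j then x j else 0) - c * (G j i * x j) := by
      intro j; split <;> ring
    rw [Finset.sum_congr rfl fun j _ => hsplit j, Finset.sum_sub_distrib,
      Finset.sum_ite_eq, ← Finset.mul_sum]
    simp only [mem_univ, if_pos]
    have hsum : ∑ j, G j i * x j = (1 / ((n:ℝ) - 1)) * x h := by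
      rw [← Finset.add_sum_erase _ _ (mem_univ h), hGout i hi]
      have : ∑ j ∈ univ.erase h, G j i * x j = 0 := by
        refine Finset.sum_eq_zero fun j hj => ?_
        rw [hGzero j i hi (Finset.ne_of_mem_erase hj), zero_mul]
      rw [this, add_zero]
    rw [hsum]; ring
  -- injectivity hence invertibility
  have hinj : Function.Injective (M.mulVec) := by
    intro x y hxy
    have hz : M *ᵥ (x - y) = 0 := by rw [Matrix.mulVec_sub, hxy, sub_self]
    have hzh : (x - y) h = 0 := by
      have h1 := hMh (x - y)
      have h2 : ∀ i, i ≠ h → (x - y) i = c / ((n:ℝ) - 1) * (x - y) h := by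
        intro i hi
        have h3 := hMi (x - y) i hi
        rw [hz] at h3
        simp only [Pi.zero_apply, Pi.sub_apply] at h3
        simp only [Pi.sub_apply]
        linarith
      rw [hz] at h1
      have hsum : ∑ j ∈ univ.erase h, (x - y) j = c * (x - y) h := by
        rw [Finset.sum_congr rfl fun j hj => h2 j (Finset.ne_of_mem_erase hj),
          Finset.sum_const, Finset.card_erase_of_mem (mem_univ h), Finset.card_univ,
          Fintype.card_fin, nsmul_eq_mul]
        have : ((n - 1 : ℕ) : ℝ) = (n:ℝ) - 1 := by
          have : 1 ≤ n := le_trans one_le_two hn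
          push_cast [this]; ring
        rw [this]
        field_simp
      rw [hsum] at h1
      have : (x - y) h * (1 - c * c) = 0 := by
        have := h1.symm
        simp only [Pi.zero_apply] at this ⊢
        nlinarith [this]
      have hne : (1 : ℝ) - c * c ≠ 0 := by nlinarith
      exact (mul_eq_zero.mp this).resolve_right hne
    have : ∀ i, (x - y) i = 0 := by
      intro i
      by_cases hi : i = h
      · rw [hi]; exact hzh
      · have := hMi (x - y) i hi
        rw [hz, hzh] at this
        simpa using this.symm
    have hxy0 : x - y = 0 := funext this
    exact sub_eq_zero.mp hxy0
  have hunit : IsUnit M := Matrix.mulVec_injective_iff_isUnit.mp hinj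
  -- candidate vector
  set w : Fin n → ℝ := fun i =>
    if i = h then (1 + c * ((n:ℝ) - 1)) / (1 - c ^ 2)
    else (1 + c / ((n:ℝ) - 1)) / (1 - c ^ 2) with hw
  have hMw : M *ᵥ w = fun _ => (1:ℝ) := by
    funext i
    by_cases hi : i = h
    · subst hi
      rw [hMh]
      have hsum : ∑ j ∈ univ.erase i, w j = ((n:ℝ) - 1) * ((1 + c / ((n:ℝ) - 1)) / (1 - c ^ 2)) := by
        have : ∀ j ∈ univ.erase i, w j = (1 + c / ((n:ℝ) - 1)) / (1 - c ^ 2) := by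
          intro j hj
          simp [hw, Finset.ne_of_mem_erase hj]
        rw [Finset.sum_congr rfl this, Finset.sum_const, Finset.card_erase_of_mem (mem_univ i),
          Finset.card_univ, Fintype.card_fin, nsmul_eq_mul]
        congr 1
        have h1 : 1 ≤ n := le_trans one_le_two hn
        push_cast [h1]; ring
      rw [hsum]
      have hwh : w i = (1 + c * ((n:ℝ) - 1)) / (1 - c ^ 2) := by simp [hw]
      rw [hwh]
      field_simp
      ring
    · rw [hMi w i hi]
      have hwi : w i = (1 + c / ((n:ℝ) - 1)) / (1 - c ^ 2) := by simp [hw, hi]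
      have hwh : w h = (1 + c * ((n:ℝ) - 1)) / (1 - c ^ 2) := by simp [hw]
      rw [hwi, hwh]
      field_simp
      ring
  have hvw : v = w := by
    rw [hv, ← hMw, Matrix.mulVec_mulVec, Matrix.nonsing_inv_mul M
      ((Matrix.isUnit_iff_isUnit_det M).mp hunit), Matrix.one_mulVec]
  constructor
  · rw [hvw]
    simp only [hw, if_pos rfl, hc]
    congr 1
    field_simp
  · intro i hi
    rw [hvw]
    simp only [hw, if_neg hi, hc, div_div]
end

section
/- For any row-stochastic n×n matrix G (n ≥ 2) with zero diagonal, and 0 < δ < 2β, every entry of the centrality vector v = (I - δ(G/(2β))ᵀ)⁻¹𝟙 is at most v_h^s := (1 + δ(n-1)/(2β))/(1 - (δ/(2β))²), the central-agent centrality of the star graph. -/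
open Matrix Finset
open scoped NNReal

section Aux

attribute [local instance] Matrix.linftyOpNormedRing Matrix.linftyOpNormedAlgebra

/-- entries of the inverse of `1 - C` are nonnegative when `C` is entrywise nonnegative
with norm `< 1`. -/
lemma inv_one_sub_entry_nonneg {n : ℕ} (C : Matrix (Fin n) (Fin n) ℝ)
    (h : ‖C‖ < 1) (hC : ∀ i j, 0 ≤ C i j) (i j : Fin n) :
    0 ≤ (1 - C)⁻¹ i j := by
  have hpow : ∀ (k : ℕ) (a b : Fin n), 0 ≤ (C ^ k) a b := by
    intro k
    induction k with
    | zero => intro a b; by_cases hab : a = b <;> simp [pow_zero, Matrix.one_apply, hab]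
    | succ m ih =>
      intro a b
      rw [pow_succ, Matrix.mul_apply]
      exact Finset.sum_nonneg fun c _ => mul_nonneg (ih a c) (hC c b)
  have key : (1 - C)⁻¹ i j = ∑' k : ℕ, (C ^ k) i j := by
    rw [Matrix.nonsing_inv_eq_ringInverse, ← geom_series_eq_inverse C h]
    have hs : Summable fun k : ℕ => C ^ k := summable_geometric_of_norm_lt_one h
    have hs2 : Summable fun k : ℕ => (C ^ k) i := (Pi.summable.mp hs) i
    have e1 : (∑' k : ℕ, C ^ k) i = ∑' k : ℕ, (C ^ k) i := tsum_apply hs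
    exact (congrFun e1 j).trans (tsum_apply hs2)
  rw [key]
  exact tsum_nonneg fun k => hpow k i j

lemma norm_le_of_rows {n : ℕ} (C : Matrix (Fin n) (Fin n) ℝ) (c : ℝ) (hc : 0 ≤ c)
    (h : ∀ i, ∑ j, |C i j| ≤ c) : ‖C‖ ≤ c := by
  rw [Matrix.linfty_opNorm_def]
  have : ∀ i : Fin n, (∑ j, ‖C i j‖₊ : ℝ≥0) ≤ ⟨c, hc⟩ := by
    intro i
    refine NNReal.coe_le_coe.mp ?_
    push_cast
    exact (by simpa [Real.norm_eq_abs] using h i : ∑ j, ‖C i j‖ ≤ c)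
  calc ((Finset.univ : Finset (Fin n)).sup fun i => ∑ j, ‖C i j‖₊ : ℝ≥0)
      ≤ ((⟨c, hc⟩ : ℝ≥0) : ℝ) := by
        exact_mod_cast Finset.sup_le fun i _ => this i
    _ = c := rfl

lemma isUnit_one_sub' {n : ℕ} (C : Matrix (Fin n) (Fin n) ℝ) (h : ‖C‖ < 1) :
    IsUnit (1 - C) := isUnit_one_sub_of_norm_lt_one h

end Aux

theorem centrality_le_star_center (n : ℕ) (hn : 2 ≤ n) (G : Matrix (Fin n) (Fin n) ℝ) (δ β : ℝ)
    (hG0 : ∀ i j, 0 ≤ G i j) (hGrow : ∀ i, ∑ j, G i j = 1) (hGdiag : ∀ i, G i i = 0)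
    (hδ0 : 0 < δ) (hδβ : δ < 2 * β)
    (v : Fin n → ℝ)
    (hv : v = ((1 : Matrix (Fin n) (Fin n) ℝ) - δ • ((2 * β)⁻¹ • G)ᵀ)⁻¹ *ᵥ (fun _ => (1 : ℝ))) :
    ∀ i, v i ≤ (1 + δ * (n - 1) / (2 * β)) / (1 - (δ / (2 * β)) ^ 2) := by
  have hβ0 : (0:ℝ) < 2 * β := lt_trans hδ0 hδβ
  set r : ℝ := δ / (2 * β) with hr
  have hr0 : 0 < r := div_pos hδ0 hβ0
  have hr1 : r < 1 := (div_lt_one hβ0).mpr hδβ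
  set C : Matrix (Fin n) (Fin n) ℝ := r • G with hCdef
  -- rewrite the matrix in hv
  have hmat : ((1 : Matrix (Fin n) (Fin n) ℝ) - δ • ((2 * β)⁻¹ • G)ᵀ) = (1 - C)ᵀ := by
    have hC' : C = δ • (2 * β)⁻¹ • G := by rw [hCdef, smul_smul, hr, div_eq_mul_inv]
    rw [Matrix.transpose_sub, Matrix.transpose_one, hC']
    simp [Matrix.transpose_smul]
  -- norm bound
  letI := Matrix.linftyOpNormedRing (n := Fin n) (α := ℝ)
  letI := Matrix.linftyOpNormedAlgebra (n := Fin n) (α := ℝ) (R := ℝ)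
  have hnorm : ‖C‖ < 1 := by
    have : ‖C‖ ≤ r := by
      apply norm_le_of_rows C r hr0.le
      intro i
      have : ∀ j, |C i j| = r * G i j := by
        intro j
        rw [hCdef, Matrix.smul_apply, smul_eq_mul, abs_of_nonneg (mul_nonneg hr0.le (hG0 i j))]
      simp_rw [this, ← Finset.mul_sum, hGrow i, mul_one]
      exact le_refl r
    linarith
  have hC0 : ∀ i j, 0 ≤ C i j := fun i j => mul_nonneg hr0.le (hG0 i j)
  have hunit : IsUnit (1 - C) := isUnit_one_sub' C hnorm
  have hdet : IsUnit (1 - C).det := hunit.map (Matrix.detMonoidHom)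
  have hdetT : IsUnit ((1 - C)ᵀ).det := by rwa [Matrix.det_transpose]
  -- nonnegativity of v
  have hinvnn : ∀ i j, 0 ≤ (1 - C)⁻¹ i j := inv_one_sub_entry_nonneg C hnorm hC0
  have hvT : v = ((1 - C)⁻¹)ᵀ *ᵥ (fun _ => (1:ℝ)) := by
    rw [hv, hmat, ← Matrix.transpose_nonsing_inv]
  have hv0 : ∀ i, 0 ≤ v i := by
    intro i
    rw [hvT]
    simp only [Matrix.mulVec, dotProduct, Matrix.transpose_apply, mul_one]
    exact Finset.sum_nonneg fun j _ => hinvnn j i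
  -- fixed point equation
  have hfix : ∀ i, v i = 1 + r * ∑ j, G j i * v j := by
    have h1 : ((1 - C)ᵀ) *ᵥ v = (fun _ => (1:ℝ)) := by
      rw [hv, hmat, Matrix.mulVec_mulVec, Matrix.mul_nonsing_inv _ hdetT, Matrix.one_mulVec]
    have h1' : v - Cᵀ *ᵥ v = fun _ => (1:ℝ) := by
      rw [← h1, Matrix.transpose_sub, Matrix.transpose_one, Matrix.sub_mulVec,
        Matrix.one_mulVec]
    intro i
    have h2' : v i - (Cᵀ *ᵥ v) i = 1 := congrFun h1' i
    have h3 : (Cᵀ *ᵥ v) i = r * ∑ j, G j i * v j := by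
      simp only [Matrix.mulVec, dotProduct, Matrix.transpose_apply, hCdef,
        Matrix.smul_apply, smul_eq_mul, Finset.mul_sum, mul_assoc]
    rw [h3] at h2'
    linarith
  -- v ≥ 1
  have hv1 : ∀ i, 1 ≤ v i := by
    intro i
    have hs : 0 ≤ ∑ j, G j i * v j :=
      Finset.sum_nonneg fun j _ => mul_nonneg (hG0 j i) (hv0 j)
    have := hfix i
    nlinarith
  -- sum identity
  have hsum : ∑ i, v i = n + r * ∑ i, v i := by
    have h0 : ∑ i, v i = ∑ i, (1 + r * ∑ j, G j i * v j) :=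
      Finset.sum_congr rfl fun i _ => hfix i
    have hswap : ∑ i : Fin n, ∑ j, G j i * v j = ∑ j : Fin n, v j := by
      rw [Finset.sum_comm]
      exact Finset.sum_congr rfl fun j _ => by rw [← Finset.sum_mul, hGrow j, one_mul]
    conv_lhs => rw [h0]
    rw [Finset.sum_add_distrib, ← Finset.mul_sum, hswap, Finset.sum_const,
      Finset.card_univ, Fintype.card_fin, nsmul_eq_mul, mul_one]
  have hS : ∑ i, v i = n / (1 - r) := by
    have h1r : 1 - r ≠ 0 := by linarith
    field_simp
    linarith [hsum]
  -- choose the max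
  intro i
  obtain ⟨i0, _, hmax⟩ := Finset.exists_max_image (Finset.univ : Finset (Fin n)) v
    ⟨i, Finset.mem_univ i⟩
  have hle : v i ≤ v i0 := hmax i (Finset.mem_univ i)
  -- bound on the rest
  have hrest : ∀ j, j ≠ i0 → 1 + r * (G i0 j * v i0) ≤ v j := by
    intro j hj
    have hsum_ge : G i0 j * v i0 ≤ ∑ k, G k j * v k := by
      apply Finset.single_le_sum (f := fun k => G k j * v k)
        (fun k _ => mul_nonneg (hG0 k j) (hv0 k)) (Finset.mem_univ i0)
    have := hfix j
    nlinarith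
  -- sum over j ≠ i0
  have hsplit : ∑ j, v j = v i0 + ∑ j ∈ Finset.univ.erase i0, v j := by
    rw [← Finset.add_sum_erase _ v (Finset.mem_univ i0)]
  have hGsum : ∑ j ∈ Finset.univ.erase i0, G i0 j = 1 := by
    have := Finset.add_sum_erase Finset.univ (G i0) (Finset.mem_univ i0)
    rw [hGdiag i0, zero_add] at this
    rw [this, hGrow i0]
  have hrest_sum : (n - 1 : ℝ) + r * v i0 ≤ ∑ j ∈ Finset.univ.erase i0, v j := by
    have hcard : (Finset.univ.erase i0).card = n - 1 := by
      rw [Finset.card_erase_of_mem (Finset.mem_univ i0), Finset.card_univ, Fintype.card_fin]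
    have e1 : ∑ j ∈ Finset.univ.erase i0, (1 + r * (G i0 j * v i0)) = ((n:ℝ) - 1) + r * v i0 := by
      rw [Finset.sum_add_distrib, Finset.sum_const, hcard]
      have e2 : ∑ j ∈ Finset.univ.erase i0, r * (G i0 j * v i0) = r * v i0 := by
        simp_rw [mul_comm (G i0 _) (v i0), ← mul_assoc, ← Finset.mul_sum, hGsum, mul_one]
      rw [e2, nsmul_eq_mul, mul_one]
      have hn1 : ((n - 1 : ℕ) : ℝ) = (n : ℝ) - 1 := by
        have h1n : 1 ≤ n := le_trans one_le_two hn
        push_cast [h1n]; ring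
      rw [hn1]
    calc (n - 1 : ℝ) + r * v i0
        = ∑ j ∈ Finset.univ.erase i0, (1 + r * (G i0 j * v i0)) := e1.symm
      _ ≤ ∑ j ∈ Finset.univ.erase i0, v j :=
          Finset.sum_le_sum fun j hj => hrest j (Finset.ne_of_mem_erase hj)
  -- combine
  have hkey : v i0 + ((n:ℝ) - 1) + r * v i0 ≤ (n:ℝ) / (1 - r) := by
    have := hS
    rw [hsplit] at this
    linarith [hrest_sum]
  have h1r : (0:ℝ) < 1 - r := by linarith
  have h1r' : (0:ℝ) < 1 + r := by linarith
  have hbound : v i0 ≤ (1 + r * ((n:ℝ) - 1)) / (1 - r ^ 2) := by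
    have hkey2 : (v i0 + ((n:ℝ) - 1) + r * v i0) * (1 - r) ≤ (n:ℝ) :=
      (le_div_iff₀ h1r).mp hkey
    rw [le_div_iff₀ (by nlinarith : (0:ℝ) < 1 - r ^ 2)]
    nlinarith
  have hn2 : (2:ℝ) ≤ (n:ℝ) := by exact_mod_cast hn
  calc v i ≤ v i0 := hle
    _ ≤ (1 + r * ((n:ℝ) - 1)) / (1 - r ^ 2) := hbound
    _ = (1 + δ * (n - 1) / (2 * β)) / (1 - (δ / (2 * β)) ^ 2) := by
        rw [hr]; ring_nf
end

section
/- Consider the two-variable zero-sum game with payoffs U_a(q_a,q_b) = C₁ - c₂ q_a + λ(q_a - q_b)/(q_a + q_b) for firm a (maximizing over q_a > 0) and U_b(q_a,q_b) = C₁' - c₂ q_b + λ(q_b - q_a)/(q_a + q_b) for firm b (maximizing over q_b > 0), where λ, c₂ > 0. The unique interior critical point (satisfying ∂U_a/∂q_a = 0 and ∂U_b/∂q_b = 0) with the constants c₂ replaced by (c_q/c_s)v_k and (c_q/c_s)v_l respectively, is q_a* = 2λ(c_s/c_q)·v_l/(v_k + v_l)² and q_b* = 2λ(c_s/c_q)·v_k/(v_k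 + v_l)², where v_k, v_l > 0. -/
theorem nash_first_order_condition (lam cs cq vk vl qa qb : ℝ)
    (hlam : 0 < lam) (hcs : 0 < cs) (hcq : 0 < cq) (hvk : 0 < vk) (hvl : 0 < vl)
    (hqa : 0 < qa) (hqb : 0 < qb) :
    (-(cq / cs) * vk + 2 * lam * qb / (qa + qb) ^ 2 = 0 ∧
      -(cq / cs) * vl + 2 * lam * qa / (qa + qb) ^ 2 = 0) ↔
    (qa = 2 * lam * (cs / cq) * (vl / (vk + vl) ^ 2) ∧
      qb = 2 * lam * (cs / cq) * (vk / (vk + vl) ^ 2)) := by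
  have hs : (0:ℝ) < qa + qb := by linarith
  have hv : (0:ℝ) < vk + vl := by linarith
  constructor
  · rintro ⟨h1, h2⟩
    have h1' : cq * vk * (qa + qb) ^ 2 = 2 * lam * qb * cs := by
      field_simp at h1; linarith
    have h2' : cq * vl * (qa + qb) ^ 2 = 2 * lam * qa * cs := by
      field_simp at h2; linarith
    have hsum : cq * (vk + vl) * (qa + qb) = 2 * lam * cs := by
      have h3 : cq * (vk + vl) * (qa + qb) * (qa + qb) = 2 * lam * cs * (qa + qb) := by
        nlinarith [h1', h2']
      exact mul_right_cancel₀ (ne_of_gt hs) h3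
    have key : vk * qa = vl * qb := by
      have h4 : vk * qa * (cq * (qa + qb) ^ 2) = vl * qb * (cq * (qa + qb) ^ 2) := by
        nlinarith [h1', h2']
      exact mul_right_cancel₀ (by positivity) h4
    constructor
    · field_simp
      linear_combination vl * hsum + cq * (vk + vl) * key
    · field_simp
      linear_combination vk * hsum - cq * (vk + vl) * key
  · rintro ⟨ha, hb⟩
    subst ha hb
    constructor <;> (field_simp; ring)
end

section
/- For n ≥ 2 and 0 < δ < 2β, the star-graph noncentral centrality v_l^s = (1 + δ/(2β(n-1)))/(1 - (δ/(2β))²) is strictly less than the balanced-graph centrality v̄ = 2β/(2β - δ), and v̄ is strictly less than the star central centrality v_h^s = (1 + δ(n-1)/(2β))/(1 - (δ/(2β))²). -/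
theorem star_balanced_centrality_inequalities (n : ℕ) (hn : 3 ≤ n) (δ β : ℝ)
    (hδ0 : 0 < δ) (hδβ : δ < 2 * β) :
    (1 + δ / (2 * β * (n - 1))) / (1 - (δ / (2 * β)) ^ 2) < 2 * β / (2 * β - δ) ∧
    2 * β / (2 * β - δ) < (1 + δ * (n - 1) / (2 * β)) / (1 - (δ / (2 * β)) ^ 2) := by
  have hb : (0:ℝ) < 2 * β := lt_trans hδ0 hδβ
  have hm : (2:ℝ) ≤ (n:ℝ) - 1 := by
    have : (3:ℝ) ≤ (n:ℝ) := by exact_mod_cast hn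
    linarith
  have hx1 : δ / (2 * β) < 1 := (div_lt_one hb).mpr hδβ
  have hx0 : 0 < δ / (2 * β) := div_pos hδ0 hb
  have hden : 0 < 1 - (δ / (2 * β)) ^ 2 := by nlinarith
  have hsub : 0 < 2 * β - δ := by linarith
  have hb' : (2*β) ≠ 0 := ne_of_gt hb
  have hm' : (n:ℝ) - 1 ≠ 0 := by positivity
  constructor
  · rw [div_lt_div_iff₀ hden hsub, div_pow]
    rw [← sub_pos]
    field_simp [(show (0:ℝ) < β by linarith).ne']
    rw [lt_div_iff₀ (show (0:ℝ) < β by linarith)]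
    nlinarith [mul_pos (mul_pos (mul_pos hδ0 (show (0:ℝ) < (n:ℝ) - 2 by linarith)) hsub) (mul_pos hb hb)]
  · rw [div_lt_div_iff₀ hsub hden, div_pow]
    rw [← sub_pos]
    field_simp [(show (0:ℝ) < β by linarith).ne']
    rw [lt_div_iff₀ (show (0:ℝ) < β by linarith)]
    nlinarith [mul_pos (mul_pos (mul_pos hδ0 (show (0:ℝ) < (n:ℝ) - 2 by linarith)) hsub) (mul_pos hb hb)]
end

section
/- Under the threshold seeding rule, if the threshold v_c satisfies v_c > v_h^s = (1 + δ(n-1)/(2β))/(1 - (δ/(2β))²), then for every row-stochastic graph G on n vertices with zero diagonal, no agent has centrality exceeding v_c, i.e., the seeding capacity is zero. -/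
open Matrix Finset
open scoped NNReal

section Aux

attribute [local instance] Matrix.linftyOpNormedRing

variable {n : ℕ}

lemma entry_abs_le_linfty_norm (B : Matrix (Fin n) (Fin n) ℝ) (i j : Fin n) :
    |B i j| ≤ ‖B‖ := by
  have h1 : (∑ k, ‖B i k‖₊ : ℝ≥0) ≤ Finset.univ.sup (fun i => ∑ k, ‖B i k‖₊) :=
    Finset.le_sup (f := fun i => ∑ k, ‖B i k‖₊) (Finset.mem_univ i)
  calc |B i j| ≤ ∑ k, |B i k| :=
        Finset.single_le_sum (f := fun k => |B i k|) (fun k _ => abs_nonneg _)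
          (Finset.mem_univ j)
    _ = ((∑ k, ‖B i k‖₊ : ℝ≥0) : ℝ) := by
        simp [NNReal.coe_sum, coe_nnnorm, Real.norm_eq_abs]
    _ ≤ ((Finset.univ.sup (fun i => ∑ k, ‖B i k‖₊) : ℝ≥0) : ℝ) := NNReal.coe_le_coe.2 h1
    _ = ‖B‖ := (Matrix.linfty_opNorm_def B).symm

lemma linfty_norm_le_of_rows (B : Matrix (Fin n) (Fin n) ℝ) (a : ℝ) (ha : 0 ≤ a)
    (h : ∀ i, ∑ k, |B i k| ≤ a) : ‖B‖ ≤ a := by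
  rw [Matrix.linfty_opNorm_def, ← Real.coe_toNNReal a ha, NNReal.coe_le_coe]
  refine Finset.sup_le fun i _ => ?_
  rw [← NNReal.coe_le_coe, Real.coe_toNNReal a ha, NNReal.coe_sum]
  simpa [coe_nnnorm, Real.norm_eq_abs] using h i

lemma one_sub_inv_nonneg (A : Matrix (Fin n) (Fin n) ℝ) (hA : ∀ i j, 0 ≤ A i j)
    (a : ℝ) (ha0 : 0 ≤ a) (ha1 : a < 1) (hrow : ∀ i, ∑ k, A i k ≤ a) :
    IsUnit (1 - A) ∧ ∀ i j, 0 ≤ (1 - A)⁻¹ i j := by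
  have h1 : ‖A‖ < 1 := by
    have : ‖A‖ ≤ a := by
      refine linfty_norm_le_of_rows _ a ha0 fun i => ?_
      calc ∑ k, |A i k| = ∑ k, A i k := Finset.sum_congr rfl fun k _ => abs_of_nonneg (hA i k)
        _ ≤ a := hrow i
    linarith
  haveI : @CompleteSpace (Matrix (Fin n) (Fin n) ℝ) PseudoMetricSpace.toUniformSpace :=
    by exact (inferInstance : CompleteSpace (Fin n → Fin n → ℝ))
  have hU : IsUnit (1 - A) := isUnit_one_sub_of_norm_lt_one h1
  have hmul : (1 - A) * (∑' k : ℕ, A ^ k) = 1 := mul_neg_geom_series A h1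
  have hinv : (1 - A)⁻¹ = ∑' k : ℕ, A ^ k := Matrix.inv_eq_right_inv hmul
  have hp : ∀ (k : ℕ) (i j : Fin n), 0 ≤ (A ^ k) i j := by
    intro k
    induction k with
    | zero => intro i j; simp [Matrix.one_apply]; positivity
    | succ m ih =>
      intro i j
      rw [pow_succ, Matrix.mul_apply]
      exact Finset.sum_nonneg fun l _ => mul_nonneg (ih i l) (hA l j)
  refine ⟨hU, fun i j => ?_⟩
  rw [hinv]
  have hsum : Summable (fun k : ℕ => A ^ k) := summable_geometric_of_norm_lt_one h1
  have htend := hsum.hasSum.tendsto_sum_nat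
  have h2 : Filter.Tendsto (fun m => (∑ k ∈ Finset.range m, A ^ k) i j)
      Filter.atTop (nhds ((∑' k : ℕ, A ^ k) i j)) := by
    rw [tendsto_iff_dist_tendsto_zero]
    have h3 := tendsto_iff_dist_tendsto_zero.1 htend
    refine squeeze_zero (fun _ => dist_nonneg) (fun m => ?_) h3
    rw [Real.dist_eq, dist_eq_norm]
    calc |((∑ k ∈ Finset.range m, A ^ k) i j) - (∑' k : ℕ, A ^ k) i j|
        = |((∑ k ∈ Finset.range m, A ^ k) - (∑' k : ℕ, A ^ k)) i j| := by
          simp [Matrix.sub_apply]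
      _ ≤ ‖(∑ k ∈ Finset.range m, A ^ k) - (∑' k : ℕ, A ^ k)‖ :=
          entry_abs_le_linfty_norm _ i j
  refine ge_of_tendsto' h2 fun m => ?_
  rw [Matrix.sum_apply]
  exact Finset.sum_nonneg fun k _ => hp k i j

end Aux

theorem no_seeding_above_star_threshold (n : ℕ) (hn : 2 ≤ n) (δ β vc : ℝ)
    (hδ0 : 0 < δ) (hδβ : δ < 2 * β)
    (hvc : (1 + δ * (n - 1) / (2 * β)) / (1 - (δ / (2 * β)) ^ 2) < vc) :
    ∀ G : Matrix (Fin n) (Fin n) ℝ,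
      (∀ i j, 0 ≤ G i j) → (∀ i, ∑ j, G i j = 1) → (∀ i, G i i = 0) →
      ∀ v : Fin n → ℝ,
        v = ((1 : Matrix (Fin n) (Fin n) ℝ) - δ • ((2 * β)⁻¹ • G)ᵀ)⁻¹ *ᵥ (fun _ => (1 : ℝ)) →
        ∀ j, v j ≤ vc := by
  intro G hG0 hGrow hGdiag v hv j
  have hβ : 0 < 2 * β := lt_trans hδ0 hδβ
  set α : ℝ := δ / (2 * β) with hαdef
  have hα0 : 0 < α := div_pos hδ0 hβ
  have hα1 : α < 1 := (div_lt_one hβ).2 hδβ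
  -- rewrite the matrix
  set N : Matrix (Fin n) (Fin n) ℝ := 1 - α • G with hN
  have hM : ((1 : Matrix (Fin n) (Fin n) ℝ) - δ • ((2 * β)⁻¹ • G)ᵀ) = Nᵀ := by
    simp only [hN, Matrix.transpose_sub, Matrix.transpose_one, Matrix.transpose_smul,
      smul_smul, hαdef, div_eq_mul_inv]
  -- norm bound and nonneg inverse
  have hA0 : ∀ i k, 0 ≤ (α • G) i k := fun i k => by
    have := hG0 i k
    simp only [Matrix.smul_apply, smul_eq_mul]
    positivity
  have hArow : ∀ i, ∑ k, (α • G) i k ≤ α := fun i => by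
    simp only [Matrix.smul_apply, smul_eq_mul]
    rw [← Finset.mul_sum, hGrow i, mul_one]
  obtain ⟨hU, hinv0⟩ := one_sub_inv_nonneg (α • G) hA0 α (le_of_lt hα0) hα1 hArow
  have hdet : IsUnit N.det := (Matrix.isUnit_iff_isUnit_det N).1 hU
  have hdetT : IsUnit Nᵀ.det := by rwa [Matrix.det_transpose]
  -- v is nonnegative
  have hvform : v = (N⁻¹)ᵀ *ᵥ (fun _ => (1 : ℝ)) := by
    rw [hv, hM, ← Matrix.transpose_nonsing_inv]
  have hv0 : ∀ i, 0 ≤ v i := by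
    intro i
    rw [hvform]
    simp only [Matrix.mulVec, dotProduct, Matrix.transpose_apply, mul_one]
    exact Finset.sum_nonneg fun k _ => hinv0 k i
  -- the defining equation
  have heq : Nᵀ *ᵥ v = fun _ => (1 : ℝ) := by
    rw [hv, hM, Matrix.mulVec_mulVec, Matrix.mul_nonsing_inv _ hdetT, Matrix.one_mulVec]
  have heqj : ∀ i, v i = 1 + α * ∑ k, G k i * v k := by
    intro i
    have h := congrFun heq i
    simp only [Matrix.mulVec, dotProduct, Matrix.transpose_apply, hN, Matrix.sub_apply,
      Matrix.one_apply, Matrix.smul_apply, smul_eq_mul, sub_mul, mul_assoc, ite_mul, one_mul,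
      zero_mul, Finset.sum_sub_distrib, Finset.sum_ite_eq', Finset.mem_univ, if_true,
      ← Finset.mul_sum] at h
    linarith [h]
  -- total sum
  set s : ℝ := ∑ i, v i with hsdef
  have hs : s * (1 - α) = n := by
    have h2 : ∑ i : Fin n, ∑ k : Fin n, G k i * v k = s := by
      rw [Finset.sum_comm]
      refine Finset.sum_congr rfl fun k _ => ?_
      rw [← Finset.sum_mul, hGrow k, one_mul]
    have h1 : s = n + α * s := by
      calc s = ∑ i, (1 + α * ∑ k, G k i * v k) := Finset.sum_congr rfl fun i _ => heqj i
        _ = n + α * ∑ i : Fin n, ∑ k : Fin n, G k i * v k := by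
            rw [Finset.sum_add_distrib, ← Finset.mul_sum]
            simp [Finset.card_univ]
        _ = n + α * s := by rw [h2]
    linarith [h1]
  -- bound on v j
  have hGle1 : ∀ k i, G k i ≤ 1 := by
    intro k i
    rw [← hGrow k]
    exact Finset.single_le_sum (f := fun l => G k l) (fun l _ => hG0 k l) (Finset.mem_univ i)
  have hT : ∑ k, G k j * v k ≤ s - v j := by
    have h3 : ∀ k : Fin n, G k j * v k ≤ (if k = j then 0 else v k) := by
      intro k
      by_cases hk : k = j
      · subst hk; simp [hGdiag k]
      · simp only [hk, if_false]
        calc G k j * v k ≤ 1 * v k := mul_le_mul_of_nonneg_right (hGle1 k j) (hv0 k)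
          _ = v k := one_mul _
    calc ∑ k, G k j * v k ≤ ∑ k, (if k = j then 0 else v k) :=
          Finset.sum_le_sum fun k _ => h3 k
      _ = ∑ k, (v k - if k = j then v k else 0) := by
          refine Finset.sum_congr rfl fun k _ => ?_
          by_cases hk : k = j <;> simp [hk]
      _ = s - v j := by
          rw [Finset.sum_sub_distrib, Finset.sum_ite_eq' Finset.univ j v]
          simp [hsdef]
  have key : v j * (1 + α) ≤ 1 + α * s := by
    have := heqj j
    nlinarith [hT, hα0]
  -- conclude
  have hden : 0 < 1 - α ^ 2 := by nlinarith
  have hBeq : (1 + δ * (↑n - 1) / (2 * β)) / (1 - (δ / (2 * β)) ^ 2)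
      = (1 + α * (↑n - 1)) / (1 - α ^ 2) := by
    rw [hαdef]; ring_nf
  have hfin : v j ≤ (1 + α * (↑n - 1)) / (1 - α ^ 2) := by
    rw [le_div_iff₀ hden]
    nlinarith [key, hs, hα0, hα1, mul_le_mul_of_nonneg_right key (by linarith : (0:ℝ) ≤ 1 - α)]
  rw [hBeq] at hvc
  linarith [hfin, hvc]
end
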